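/- arXiv:1603.05526 — 2 statements merged into one kernel-verified Lean document; each statement's English description precedes it below -/
import Mathlib

section
/- Let κ be regular and λ = μ⁺ with μ singular. The forcing S of partial square sequences (conditions are sequences ⟨c_i : i ≤ γ⟩ for γ < λ satisfying the partial square requirements, ordered by end extension) is κ-directed closed: any directed subset of S of size < κ has a lower bound. -/
universe u

/-- A condition in the partial-square forcing `S` on `λ = μ⁺`: a sequence
`⟨c_i : i ≤ top⟩` with `top < λ`, each `c_i` a set of fewer than μ clubs of `i`
of order type ≤ μ, nonempty when `cf(i) ≥ κ`, coherent at accumulation points. -/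
structure SqCond (κ μ lam : Cardinal.{u}) where
  top : Ordinal.{u}
  top_lt : top < lam.ord
  c : Ordinal.{u} → Set (Set Ordinal.{u})
  small : ∀ i ≤ top, Cardinal.mk (c i) < Cardinal.lift.{u + 1} μ
  nonemp : ∀ i ≤ top, κ ≤ i.cof → (c i).Nonempty
  club : ∀ i ≤ top, ∀ D ∈ c i, D ⊆ Set.Iio i ∧ (∀ γ < i, ∃ δ ∈ D, γ ≤ δ) ∧
    (∀ β < i, (D ∩ Set.Iio β).Nonempty → sSup (D ∩ Set.Iio β) = β → β ∈ D) ∧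
    Ordinal.type (Subrel ((· < ·) : Ordinal.{u} → Ordinal.{u} → Prop) (· ∈ D)) ≤
      Ordinal.lift.{u + 1} μ.ord
  coh : ∀ i ≤ top, ∀ D ∈ c i, ∀ β < i,
    (D ∩ Set.Iio β).Nonempty → sSup (D ∩ Set.Iio β) = β → D ∩ Set.Iio β ∈ c β

/-- `s` end-extends `t` (i.e. `s` is a stronger condition than `t`). -/
def SqExt {κ μ lam : Cardinal.{u}} (s t : SqCond κ μ lam) : Prop :=
  t.top ≤ s.top ∧ ∀ i ≤ t.top, s.c i = t.c i

/-- The partial-square forcing is κ-directed closed: any directed family of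
conditions of size `< κ` (κ regular, `λ = μ⁺`, μ singular) has a lower bound. -/
theorem stmt_9 (κ μ lam : Cardinal.{u}) (hκ : κ.IsRegular)
    (hlam : lam = Order.succ μ) (hμinf : Cardinal.aleph0 ≤ μ) (hμsing : ¬ μ.IsRegular)
    (hκμ : κ < μ)
    (A : Set (SqCond κ μ lam))
    (hdir : ∀ s ∈ A, ∀ t ∈ A, ∃ u ∈ A, SqExt u s ∧ SqExt u t)
    (hsmallA : Cardinal.mk A < Cardinal.lift.{u + 1} κ) :
    ∃ s : SqCond κ μ lam, ∀ t ∈ A, SqExt s t := by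
  classical
  -- A is a chain: any two members agree below both tops
  have hchain : ∀ s ∈ A, ∀ t ∈ A, ∀ i, i ≤ s.top → i ≤ t.top → s.c i = t.c i := by
    intro s hs t ht i his hit
    obtain ⟨u, _, ⟨_, hus⟩, ⟨_, hut⟩⟩ := hdir s hs t ht
    rw [← hus i his, ← hut i hit]
  -- reindex A by a `Type u` index
  obtain ⟨a, ha, haA⟩ := Cardinal.lt_lift_iff.mp hsmallA
  have hιA : Cardinal.lift.{u+1, u} (Cardinal.mk a.out) = Cardinal.lift.{u, u+1} (Cardinal.mk A) := by
    rw [Cardinal.mk_out, Cardinal.lift_id'.{u, u+1}, haA]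
  obtain ⟨e⟩ := Cardinal.lift_mk_eq'.mp hιA
  set f : a.out → Ordinal.{u} := fun j => ((e j : SqCond κ μ lam)).top with hf
  have hbdd : BddAbove (Set.range f) := Ordinal.bddAbove_range.{u, u} f
  have hT : ∀ t ∈ A, t.top ≤ iSup f := by
    intro t ht
    have : t.top = f (e.symm ⟨t, ht⟩) := by simp [hf]
    rw [this]
    exact le_ciSup hbdd _
  have hfι : Cardinal.mk a.out < κ := by rw [Cardinal.mk_out]; exact ha
  -- the union condition's levels
  set cc : Ordinal.{u} → Set (Set Ordinal.{u}) :=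
    fun i => { D | ∃ t ∈ A, i ≤ t.top ∧ D ∈ t.c i } with hcc_def
  have hcc : ∀ t ∈ A, ∀ i ≤ t.top, cc i = t.c i := by
    intro t ht i hit
    ext D
    constructor
    · rintro ⟨t', ht', hit', hD⟩
      rw [← hchain t' ht' t ht i hit' hit]
      exact hD
    · intro hD
      exact ⟨t, ht, hit, hD⟩
  have hccmem : ∀ i, ∀ D ∈ cc i, ∃ t ∈ A, i ≤ t.top ∧ D ∈ t.c i := fun i D hD => hD
  have hlamreg : lam ≤ lam.ord.cof := by
    rw [hlam]
    exact (Cardinal.isRegular_succ hμinf).2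
  have htoplt : iSup f < lam.ord := by
    apply Ordinal.iSup_lt_ord
    · exact lt_of_lt_of_le (lt_trans hfι (lt_trans hκμ (by rw [hlam]; exact Order.lt_succ μ))) hlamreg
    · intro i
      exact ((e i : SqCond κ μ lam)).top_lt
  refine ⟨⟨iSup f, htoplt, cc, ?_, ?_, ?_, ?_⟩, ?_⟩
  · -- small
    intro i hi
    by_cases h : ∃ t ∈ A, i ≤ t.top
    · obtain ⟨t, ht, hit⟩ := h
      rw [hcc t ht i hit]
      exact t.small i hit
    · have : cc i = ∅ := by
        ext D
        simp only [Set.mem_empty_iff_false, iff_false]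
        rintro ⟨t, ht, hit, -⟩
        exact h ⟨t, ht, hit⟩
      rw [this, Cardinal.mk_emptyCollection]
      exact by
        rw [show (0 : Cardinal.{u+1}) = Cardinal.lift.{u+1} (0 : Cardinal.{u}) from Cardinal.lift_zero.symm]
        exact Cardinal.lift_lt.2 (lt_of_lt_of_le Cardinal.aleph0_pos hμinf)
  · -- nonemp
    intro i hi hcof
    by_cases h : ∃ t ∈ A, i ≤ t.top
    · obtain ⟨t, ht, hit⟩ := h
      rw [hcc t ht i hit]
      exact t.nonemp i hit hcof
    · exfalso
      push_neg at h
      have hlt : ∀ j, f j < i := by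
        intro j
        exact h (e j : SqCond κ μ lam) (e j).2
      have hsup_le : iSup f ≤ i := ciSup_le' fun j => (hlt j).le
      have hieq : i = iSup f := le_antisymm hi hsup_le
      have : Ordinal.cof (iSup f) ≤ Cardinal.mk a.out := by
        apply Ordinal.cof_iSup_le
        intro j
        rw [← hieq]
        exact hlt j
      rw [← hieq] at this
      exact absurd (le_trans hcof this) (not_le.2 hfι)
  · -- club
    intro i hi D hD
    obtain ⟨t, ht, hit, hDt⟩ := hccmem i D hD
    exact t.club i hit D hDt
  · -- coh
    intro i hi D hD β hβ hne hsup
    obtain ⟨t, ht, hit, hDt⟩ := hccmem i D hD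
    have hβt : β ≤ t.top := le_trans hβ.le hit
    rw [hcc t ht β hβt]
    exact t.coh i hit D hDt β hβ hne hsup
  · -- lower bound
    intro t ht
    exact ⟨hT t ht, fun i hi => hcc t ht i hi⟩
end

section
/- In the threading argument: the set D of conditions ⟨s, ť⟩ in S ∗ T_η with t an element of the top level of s (i.e., dom(s) = γ+1, t ∈ s(γ), and max(t) = γ) is dense in S ∗ T_η, and moreover D is η-closed: every decreasing sequence from D of length < η has a lower bound in D. -/
universe u

/-- A condition in the two-step forcing `S ∗ T_η`: a square condition together
with a club `t` appearing in some `c_α` of it, with `1 < otp(t) < η`. -/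
def TCond (κ μ lam η : Cardinal.{u}) : Type (u + 1) :=
  {p : SqCond κ μ lam × Set Ordinal.{u} // ∃ α ≤ p.1.top, p.2 ∈ p.1.c α ∧
    1 < Ordinal.type (Subrel ((· < ·) : Ordinal.{u} → Ordinal.{u} → Prop) (· ∈ p.2)) ∧
    Ordinal.type (Subrel ((· < ·) : Ordinal.{u} → Ordinal.{u} → Prop) (· ∈ p.2)) <
      Ordinal.lift.{u + 1} η.ord}

/-- `p` extends `q` in `S ∗ T_η`: the square part end-extends and the thread
part end-extends. -/
def TExt {κ μ lam η : Cardinal.{u}} (p q : TCond κ μ lam η) : Prop :=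
  SqExt p.1.1 q.1.1 ∧ q.1.2 ⊆ p.1.2 ∧
    ∀ x ∈ p.1.2, x ∉ q.1.2 → ∀ y ∈ q.1.2, y < x

/-- The set `D` of conditions whose thread lies in the top level of the square
part. -/
def TopSet (κ μ lam η : Cardinal.{u}) : Set (TCond κ μ lam η) :=
  {p | p.1.2 ∈ p.1.1.c p.1.1.top}

open Ordinal Set Cardinal

/-- The order type of a set of ordinals. -/
noncomputable abbrev typ (A : Set Ordinal.{u}) : Ordinal.{u+1} :=
  Ordinal.type (Subrel ((· < ·) : Ordinal.{u} → Ordinal.{u} → Prop) (· ∈ A))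

lemma typ_mono {A B : Set Ordinal.{u}} (h : A ⊆ B) : typ A ≤ typ B :=
  RelEmbedding.ordinal_type_le ⟨⟨Set.inclusion h, Set.inclusion_injective h⟩, Iff.rfl⟩

lemma typ_card (A : Set Ordinal.{u}) : (typ A).card = #A := Ordinal.card_type _

lemma typ_lt_of_card {A : Set Ordinal.{u}} {c : Cardinal.{u}} (h : #A < Cardinal.lift.{u+1} c) :
    typ A < Ordinal.lift.{u+1} c.ord := by
  rw [Cardinal.lift_ord]
  exact Cardinal.lt_ord.mpr (by rwa [typ_card])

lemma card_lt_of_typ {A : Set Ordinal.{u}} {c : Cardinal.{u}}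
    (h : typ A < Ordinal.lift.{u+1} c.ord) : #A < Cardinal.lift.{u+1} c := by
  rw [Cardinal.lift_ord] at h
  have := Cardinal.lt_ord.mp h
  rwa [typ_card] at this

/-- There is at least one condition with its thread on the top level. -/
lemma exists_base (κ μ lam η : Cardinal.{u}) (hκ : ℵ₀ ≤ κ) (hμ : ℵ₀ ≤ μ)
    (hlam : ℵ₀ ≤ lam) (hη : ℵ₀ ≤ η) :
    ∃ q : TCond κ μ lam η, q ∈ TopSet κ μ lam η := by
  have hLμ : ℵ₀ ≤ Cardinal.lift.{u+1} μ := Cardinal.aleph0_le_lift.mpr hμ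
  have hLη : ℵ₀ ≤ Cardinal.lift.{u+1} η := Cardinal.aleph0_le_lift.mpr hη
  set t₀ : Set Ordinal.{u} := {0, 1} with ht₀
  have h2 : (2:Ordinal.{u}) = Order.succ 1 := by
    rw [← Ordinal.add_one_eq_succ]; exact one_add_one_eq_two.symm
  have h12 : (1:Ordinal.{u}) < 2 := by rw [h2]; exact Order.lt_succ 1
  have h02 : (0:Ordinal.{u}) < 2 := zero_lt_one.trans h12
  have hlt2 : ∀ β : Ordinal.{u}, β < 2 → β = 0 ∨ β = 1 := by
    intro β hβ
    rw [h2, Order.lt_succ_iff] at hβ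
    rcases hβ.lt_or_eq with h | h
    · exact Or.inl (Ordinal.lt_one_iff_zero.mp h)
    · exact Or.inr h
  have h01 : (0:Ordinal.{u}) ∉ ({1} : Set Ordinal.{u}) := by simp
  have hmk : #t₀ = 2 := by
    rw [ht₀, Cardinal.mk_insert h01, Cardinal.mk_singleton, one_add_one_eq_two]
  have hcard2 : #t₀ < ℵ₀ := by
    rw [hmk]; exact_mod_cast Cardinal.nat_lt_aleph0 2
  have htyp1 : 1 < typ t₀ := by
    by_contra h
    push_neg at h
    have hc := Ordinal.card_le_card h
    rw [typ_card, hmk, Ordinal.card_one] at hc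
    have : (2:ℕ) ≤ 1 := by exact_mod_cast hc
    omega
  have hmem0 : (0:Ordinal.{u}) ∈ t₀ := Set.mem_insert _ _
  have hmem1 : (1:Ordinal.{u}) ∈ t₀ := Set.mem_insert_of_mem _ rfl
  set c₀ : Ordinal.{u} → Set (Set Ordinal.{u}) := fun i => if i = 2 then {t₀} else ∅ with hc₀
  have hc₀2 : c₀ 2 = {t₀} := if_pos rfl
  refine ⟨⟨⟨{ top := 2
              top_lt := ?_
              c := c₀
              small := ?_
              nonemp := ?_
              club := ?_
              coh := ?_ }, t₀⟩, 2, le_rfl, ?_, htyp1, typ_lt_of_card (hcard2.trans_le hLη)⟩, ?_⟩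
  · -- top_lt
    have hω : (Ordinal.omega0 : Ordinal.{u}) ≤ lam.ord := by
      rw [← Cardinal.ord_aleph0]; exact Cardinal.ord_le_ord.mpr hlam
    exact lt_of_lt_of_le (by exact_mod_cast Ordinal.nat_lt_omega0 2) hω
  · -- small
    intro i _
    by_cases h : i = 2
    · subst h; rw [hc₀2, Cardinal.mk_singleton]
      exact one_lt_aleph0.trans_le hLμ
    · have he : c₀ i = ∅ := if_neg h
      rw [he, Cardinal.mk_emptyCollection]
      exact aleph0_pos.trans_le hLμ
  · -- nonemp
    intro i hi hcof
    by_cases h : i = 2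
    · subst h; rw [hc₀2]; exact ⟨t₀, rfl⟩
    · exfalso
      have h1 : κ ≤ 2 := by
        refine hcof.trans ((Ordinal.cof_le_card i).trans ?_)
        have := Ordinal.card_le_card hi
        simpa using this
      have h2' : (2:Cardinal.{u}) < ℵ₀ := by exact_mod_cast Cardinal.nat_lt_aleph0 2
      exact absurd (hκ.trans h1) (not_le.mpr h2')
  · -- club
    intro i hi D hD
    by_cases h : i = 2
    · subst h
      rw [hc₀2, Set.mem_singleton_iff] at hD; subst hD
      refine ⟨?_, ?_, ?_, (typ_lt_of_card (hcard2.trans_le hLμ)).le⟩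
      · intro x hx
        rcases hx with rfl | hx
        · exact h02
        · rw [Set.mem_singleton_iff] at hx; subst hx; exact h12
      · intro g hg
        exact ⟨1, hmem1, by rw [h2, Order.lt_succ_iff] at hg; exact hg⟩
      · intro β hβ _ _
        rcases hlt2 β hβ with rfl | rfl
        · exact hmem0
        · exact hmem1
    · have he : c₀ i = ∅ := if_neg h
      rw [he] at hD; exact absurd hD (Set.notMem_empty D)
  · -- coh
    intro i hi D hD β hβ hne hsup
    by_cases h : i = 2
    · subst h
      rw [hc₀2, Set.mem_singleton_iff] at hD; subst hD
      exfalso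
      rcases hlt2 β hβ with rfl | rfl
      · obtain ⟨x, _, hx2⟩ := hne
        exact lt_irrefl x (hx2.trans_le zero_le)
      · have hset : t₀ ∩ Set.Iio 1 = {0} := by
          ext x
          simp only [ht₀, Set.mem_inter_iff, Set.mem_insert_iff, Set.mem_singleton_iff,
            Set.mem_Iio]
          constructor
          · rintro ⟨rfl | rfl, hx⟩
            · rfl
            · exact absurd hx (lt_irrefl 1)
          · rintro rfl; exact ⟨Or.inl rfl, zero_lt_one⟩
        rw [hset, csSup_singleton] at hsup
        exact zero_ne_one hsup
    · have he : c₀ i = ∅ := if_neg h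
      rw [he] at hD; exact absurd hD (Set.notMem_empty D)
  · -- thread in c₀ 2
    show t₀ ∈ c₀ 2
    rw [hc₀2]; exact rfl
  · -- TopSet
    show t₀ ∈ c₀ 2
    rw [hc₀2]; exact rfl

/-- The set `D` of conditions `⟨s, ť⟩` with `t` in the top level of `s` is dense
in `S ∗ T_η`, and `D` is η-closed: every decreasing sequence from `D` of length
`< η` has a lower bound in `D`. -/
theorem stmt_10 (κ μ lam η : Cardinal.{u}) (hκ : κ.IsRegular)
    (hlam : lam = Order.succ μ) (hμinf : Cardinal.aleph0 ≤ μ)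
    (hη : η.IsRegular) (hηlam : η < lam) :
    (∀ p : TCond κ μ lam η, ∃ q ∈ TopSet κ μ lam η, TExt q p) ∧
      ∀ δ < η.ord, ∀ f : {β : Ordinal.{u} // β < δ} → TCond κ μ lam η,
        (∀ a, f a ∈ TopSet κ μ lam η) →
        (∀ a b, a ≤ b → TExt (f b) (f a)) →
        ∃ q ∈ TopSet κ μ lam η, ∀ a, TExt q (f a) := by
  subst hlam
  have hlaminf : ℵ₀ ≤ Order.succ μ := hμinf.trans (Order.le_succ μ)
  have hημ : η ≤ μ := Order.lt_succ_iff.mp hηlam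
  have hLμ : ℵ₀ ≤ Cardinal.lift.{u+1} μ := Cardinal.aleph0_le_lift.mpr hμinf
  have hLη : ℵ₀ ≤ Cardinal.lift.{u+1} η := Cardinal.aleph0_le_lift.mpr hη.aleph0_le
  have hLημ : Cardinal.lift.{u+1} η ≤ Cardinal.lift.{u+1} μ := Cardinal.lift_le.mpr hημ
  have hlamlim : Order.IsSuccLimit (Order.succ μ).ord := Cardinal.isSuccLimit_ord hlaminf
  have hlamreg : (Order.succ μ).IsRegular := Cardinal.isRegular_succ hμinf
  have hLηreg : (Cardinal.lift.{u+1} η).IsRegular := by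
    constructor
    · exact hLη
    · rw [← Cardinal.lift_ord, ← Ordinal.lift_cof]
      exact Cardinal.lift_le.mpr hη.2
  constructor
  · -- density
    rintro ⟨⟨s, t⟩, α, hαtop, htc, ht1, htη⟩
    obtain ⟨htIio, htUnb, htCl, -⟩ := s.club α hαtop t htc
    have htcard : #t < Cardinal.lift.{u+1} η := card_lt_of_typ htη
    have h1η : (1:Cardinal.{u+1}) < Cardinal.lift.{u+1} η := one_lt_aleph0.trans_le hLη
    set γ : Ordinal.{u} := Order.succ s.top with hγdef
    set t' : Set Ordinal.{u} := insert s.top (insert α t) with ht'def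
    have hstγ : s.top < γ := Order.lt_succ s.top
    have hγle : ∀ i, i ≤ γ → i ≠ γ → i ≤ s.top := fun i h hn =>
      Order.lt_succ_iff.mp (h.lt_of_ne hn)
    have hmemtop : s.top ∈ t' := Set.mem_insert _ _
    have hmemα : α ∈ t' := Set.mem_insert_of_mem _ (Set.mem_insert _ _)
    have htsub : t ⊆ t' := (Set.subset_insert _ _).trans (Set.subset_insert _ _)
    have ht'Iio : t' ⊆ Set.Iio γ := by
      intro x hx
      rcases hx with rfl | rfl | hx
      · exact hstγ
      · exact lt_of_le_of_lt hαtop hstγ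
      · exact lt_trans (lt_of_lt_of_le (htIio hx) hαtop) hstγ
    have ht'cardη : #t' < Cardinal.lift.{u+1} η := by
      have h2 : #(insert α t : Set Ordinal.{u}) < Cardinal.lift.{u+1} η :=
        lt_of_le_of_lt Cardinal.mk_insert_le (Cardinal.add_lt_of_lt hLη htcard h1η)
      exact lt_of_le_of_lt Cardinal.mk_insert_le (Cardinal.add_lt_of_lt hLη h2 h1η)
    have ht'cardμ : #t' < Cardinal.lift.{u+1} μ := ht'cardη.trans_le hLημ
    have hcap1 : ∀ β ≤ α, t' ∩ Set.Iio β = t ∩ Set.Iio β := by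
      intro β hβ
      ext x
      simp only [ht'def, Set.mem_inter_iff, Set.mem_insert_iff, Set.mem_Iio]
      constructor
      · rintro ⟨rfl | rfl | hx, hxβ⟩
        · exact absurd hxβ (not_lt.mpr (hβ.trans hαtop))
        · exact absurd hxβ (not_lt.mpr hβ)
        · exact ⟨hx, hxβ⟩
      · rintro ⟨hx, hxβ⟩; exact ⟨Or.inr (Or.inr hx), hxβ⟩
    have hcapt : t' ∩ Set.Iio α = t := by
      rw [hcap1 α le_rfl]; exact Set.inter_eq_left.mpr htIio
    have hcap2 : ∀ β, α < β → β ≤ s.top → sSup (t' ∩ Set.Iio β) = α := by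
      intro β hαβ hβs
      have hset : t' ∩ Set.Iio β = insert α t := by
        ext x
        simp only [ht'def, Set.mem_inter_iff, Set.mem_insert_iff, Set.mem_Iio]
        constructor
        · rintro ⟨rfl | rfl | hx, hxβ⟩
          · exact absurd hxβ (not_lt.mpr hβs)
          · exact Or.inl rfl
          · exact Or.inr hx
        · rintro (rfl | hx)
          · exact ⟨Or.inr (Or.inl rfl), hαβ⟩
          · exact ⟨Or.inr (Or.inr hx), lt_trans (htIio hx) hαβ⟩
      have hub : α ∈ upperBounds (insert α t) := by
        rintro x (rfl | hx)
        · exact le_rfl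
        · exact (htIio hx).le
      rw [hset]
      exact le_antisymm (csSup_le ⟨α, Set.mem_insert _ _⟩ hub)
        (le_csSup ⟨α, hub⟩ (Set.mem_insert _ _))
    set c' : Ordinal.{u} → Set (Set Ordinal.{u}) := fun i => if i = γ then {t'} else s.c i
      with hc'def
    have hc'lt : ∀ i ≤ s.top, c' i = s.c i := fun i hi =>
      if_neg (ne_of_lt (lt_of_le_of_lt hi hstγ))
    have hc'γ : c' γ = {t'} := if_pos rfl
    have hsmall' : ∀ i ≤ γ, #(c' i) < Cardinal.lift.{u+1} μ := by
      intro i hi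
      by_cases h : i = γ
      · subst h; rw [hc'γ, Cardinal.mk_singleton]; exact one_lt_aleph0.trans_le hLμ
      · rw [hc'lt i (hγle i hi h)]; exact s.small i (hγle i hi h)
    have hnonemp' : ∀ i ≤ γ, κ ≤ i.cof → (c' i).Nonempty := by
      intro i hi hk
      by_cases h : i = γ
      · subst h; rw [hc'γ]; exact ⟨t', rfl⟩
      · rw [hc'lt i (hγle i hi h)]; exact s.nonemp i (hγle i hi h) hk
    have hclub' : ∀ i ≤ γ, ∀ D ∈ c' i, D ⊆ Set.Iio i ∧ (∀ g < i, ∃ d ∈ D, g ≤ d) ∧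
        (∀ β < i, (D ∩ Set.Iio β).Nonempty → sSup (D ∩ Set.Iio β) = β → β ∈ D) ∧
        typ D ≤ Ordinal.lift.{u+1} μ.ord := by
      intro i hi D hD
      by_cases h : i = γ
      · subst h
        rw [hc'γ, Set.mem_singleton_iff] at hD; subst hD
        refine ⟨ht'Iio, ?_, ?_, (typ_lt_of_card ht'cardμ).le⟩
        · intro g hg; exact ⟨s.top, hmemtop, Order.lt_succ_iff.mp hg⟩
        · intro β hβ hne hsup
          have hβs : β ≤ s.top := Order.lt_succ_iff.mp hβ
          rcases le_or_gt β α with h1 | h2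
          · rw [hcap1 β h1] at hne hsup
            rcases h1.lt_or_eq with hlt | heq
            · exact htsub (htCl β hlt hne hsup)
            · exact heq ▸ hmemα
          · exact absurd ((hcap2 β h2 hβs).symm.trans hsup) (ne_of_lt h2)
      · rw [hc'lt i (hγle i hi h)] at hD
        exact s.club i (hγle i hi h) D hD
    have hcoh' : ∀ i ≤ γ, ∀ D ∈ c' i, ∀ β < i, (D ∩ Set.Iio β).Nonempty →
        sSup (D ∩ Set.Iio β) = β → D ∩ Set.Iio β ∈ c' β := by
      intro i hi D hD β hβ hne hsup
      by_cases h : i = γ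
      · subst h
        rw [hc'γ, Set.mem_singleton_iff] at hD; subst hD
        have hβs : β ≤ s.top := Order.lt_succ_iff.mp hβ
        rw [hc'lt β hβs]
        rcases lt_trichotomy β α with h1 | h1 | h1
        · rw [hcap1 β h1.le] at hne hsup ⊢
          exact s.coh α hαtop t htc β h1 hne hsup
        · rw [h1, hcapt]; exact h1 ▸ htc
        · exact absurd ((hcap2 β h1 hβs).symm.trans hsup) (ne_of_lt h1)
      · rw [hc'lt i (hγle i hi h)] at hD
        have hβi : β ≤ s.top := le_trans hβ.le (hγle i hi h)
        rw [hc'lt β hβi]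
        exact s.coh i (hγle i hi h) D hD β hβ hne hsup
    refine ⟨⟨⟨{ top := γ
                top_lt := hlamlim.succ_lt s.top_lt
                c := c'
                small := hsmall'
                nonemp := hnonemp'
                club := hclub'
                coh := hcoh' }, t'⟩, γ, le_rfl, ?_, ?_, ?_⟩, ?_, ?_, ?_, ?_⟩
    · show t' ∈ c' γ
      rw [hc'γ]; exact rfl
    · exact lt_of_lt_of_le ht1 (typ_mono htsub)
    · exact typ_lt_of_card ht'cardη
    · show t' ∈ c' γ
      rw [hc'γ]; exact rfl
    · exact ⟨Order.le_succ s.top, fun i hi => hc'lt i hi⟩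
    · exact htsub
    · intro x hx hxt y hy
      have hyα : y < α := htIio hy
      rcases hx with rfl | rfl | hx
      · exact lt_of_lt_of_le hyα hαtop
      · exact hyα
      · exact absurd hx hxt
  · -- closure
    intro δ hδ f hf hdec
    rcases isEmpty_or_nonempty {β : Ordinal.{u} // β < δ} with hempty | hne
    · obtain ⟨q, hq⟩ := exists_base κ μ (Order.succ μ) η hκ.aleph0_le hμinf hlaminf hη.aleph0_le
      exact ⟨q, hq, fun a => (hempty.false a).elim⟩
    haveI hsmallι : Small.{u} {β : Ordinal.{u} // β < δ} := Ordinal.small_Iio δ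
    set tops : {β : Ordinal.{u} // β < δ} → Ordinal.{u} := fun a => (f a).1.1.top with htops
    have hbdd : BddAbove (Set.range tops) := Ordinal.bddAbove_of_small
    set τ : Ordinal.{u} := sSup (Set.range tops) with hτ
    have htopsτ : ∀ a, tops a ≤ τ := fun a => le_csSup hbdd (Set.mem_range_self a)
    have hfa : ∀ a, (f a).1.2 ⊆ Set.Iio (tops a) ∧ (∀ g < tops a, ∃ d ∈ (f a).1.2, g ≤ d) ∧
        (∀ β < tops a, ((f a).1.2 ∩ Set.Iio β).Nonempty →
          sSup ((f a).1.2 ∩ Set.Iio β) = β → β ∈ (f a).1.2) ∧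
        typ (f a).1.2 ≤ Ordinal.lift.{u+1} μ.ord :=
      fun a => (f a).1.1.club (tops a) le_rfl _ (hf a)
    by_cases hattain : ∃ a₀, tops a₀ = τ
    · obtain ⟨a₀, ha₀⟩ := hattain
      refine ⟨f a₀, hf a₀, ?_⟩
      intro a
      rcases le_total a a₀ with hle | hle
      · exact hdec a a₀ hle
      · have h := hdec a₀ a hle
        have htopeq : tops a = tops a₀ := le_antisymm (ha₀ ▸ htopsτ a) h.1.1
        have hsub : (f a₀).1.2 ⊆ (f a).1.2 := h.2.1
        have hteq : (f a).1.2 = (f a₀).1.2 := by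
          refine Set.Subset.antisymm ?_ hsub
          intro x hx
          by_contra hxn
          have hlt := h.2.2 x hx hxn
          have hxlt : x < tops a := (hfa a).1 hx
          obtain ⟨y, hy, hxy⟩ := (hfa a₀).2.1 x (by rw [← htopeq]; exact hxlt)
          exact absurd hxy (not_le.mpr (hlt y hy))
        refine ⟨⟨htopeq.le, fun i hi => (h.1.2 i (le_trans hi htopeq.le)).symm⟩, hteq.subset, ?_⟩
        intro x hx hxn
        exact ((hxn (hsub hx)).elim)
    · have hbound : ∀ a, tops a < τ := fun a => (htopsτ a).lt_of_ne (fun h => hattain ⟨a, h⟩)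
      have hlt_iff : ∀ i, i < τ → ∃ a, i < tops a := by
        intro i hi
        rw [hτ, lt_csSup_iff hbdd (Set.range_nonempty tops)] at hi
        obtain ⟨b, ⟨a, rfl⟩, hab⟩ := hi
        exact ⟨a, hab⟩
      set tstar : Set Ordinal.{u} := ⋃ a, (f a).1.2 with htstar
      have hsubstar : ∀ a, (f a).1.2 ⊆ tstar := fun a => Set.subset_iUnion (fun a => (f a).1.2) a
      have hK2 : ∀ a x, x ∈ tstar → x < tops a → x ∈ (f a).1.2 := by
        intro a x hx hxa
        rw [htstar, Set.mem_iUnion] at hx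
        obtain ⟨b, hxb⟩ := hx
        rcases le_total b a with hba | hab
        · exact (hdec b a hba).2.1 hxb
        · by_contra hxn
          have hlt := (hdec a b hab).2.2 x hxb hxn
          obtain ⟨y, hy, hxy⟩ := (hfa a).2.1 x hxa
          exact absurd hxy (not_le.mpr (hlt y hy))
      set cstar : Ordinal.{u} → Set (Set Ordinal.{u}) :=
        fun i => if i = τ then {tstar} else {D | ∃ a, i ≤ tops a ∧ D ∈ (f a).1.1.c i}
        with hcstar
      have hcτ : cstar τ = {tstar} := if_pos rfl
      have hK1 : ∀ a i, i ≤ tops a → cstar i = (f a).1.1.c i := by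
        intro a i hi
        have hne' : i ≠ τ := ne_of_lt (lt_of_le_of_lt hi (hbound a))
        have he : cstar i = {D | ∃ b, i ≤ tops b ∧ D ∈ (f b).1.1.c i} := if_neg hne'
        rw [he]
        ext D
        constructor
        · rintro ⟨b, hib, hDb⟩
          rcases le_total a b with hab | hba
          · rw [← (hdec a b hab).1.2 i hi]; exact hDb
          · rw [← (hdec b a hba).1.2 i hib] at hDb; exact hDb
        · intro hD; exact ⟨a, hi, hD⟩
      have hcard_a : ∀ a, #((f a).1.2) < Cardinal.lift.{u+1} η := by
        intro a
        obtain ⟨α', hα', hc', h1', hηa⟩ := (f a).2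
        exact card_lt_of_typ hηa
      have hmkι : #{β : Ordinal.{u} // β < δ} = Cardinal.lift.{u+1} δ.card :=
        Ordinal.mk_Iio_ordinal δ
      have hι : #{β : Ordinal.{u} // β < δ} < Cardinal.lift.{u+1} η := by
        rw [hmkι]
        exact Cardinal.lift_lt.mpr (Cardinal.lt_ord.mp hδ)
      have hcstarcard : #tstar < Cardinal.lift.{u+1} η := by
        rw [htstar]
        exact (Cardinal.card_iUnion_lt_iff_forall_of_isRegular hLηreg hι).mpr hcard_a
      have h1star : 1 < typ tstar := by
        obtain ⟨a₀⟩ := hne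
        obtain ⟨α', hα', hc', h1', hη'⟩ := (f a₀).2
        exact lt_of_lt_of_le h1' (typ_mono (hsubstar a₀))
      have hstarη : typ tstar < Ordinal.lift.{u+1} η.ord := typ_lt_of_card hcstarcard
      have hstarμ : typ tstar ≤ Ordinal.lift.{u+1} μ.ord :=
        (typ_lt_of_card (hcstarcard.trans_le hLημ)).le
      have hτlt : τ < (Order.succ μ).ord := by
        have e := (equivShrink {β : Ordinal.{u} // β < δ}).symm
        have hrange : Set.range tops = Set.range (tops ∘ e) :=
          (Function.Surjective.range_comp e.surjective tops).symm
        have hτ2 : τ = iSup (tops ∘ e) := by rw [hτ, iSup, hrange]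
        rw [hτ2]
        apply Ordinal.iSup_lt_ord
        · rw [hlamreg.cof_eq]
          have hsh : #(Shrink.{u} {β : Ordinal.{u} // β < δ}) = δ.card := by
            have h1 : Cardinal.lift.{u+1} #(Shrink.{u} {β : Ordinal.{u} // β < δ}) =
                Cardinal.lift.{u} #{β : Ordinal.{u} // β < δ} := Cardinal.lift_mk_shrink' _
            rw [hmkι, Cardinal.lift_lift] at h1
            exact Cardinal.lift_injective h1
          rw [hsh]
          exact lt_of_lt_of_le (Cardinal.lt_ord.mp hδ) (hημ.trans (Order.le_succ μ))
        · intro i; exact (f (e i)).1.1.top_lt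
      have hstarIio : tstar ⊆ Set.Iio τ := by
        intro x hx
        rw [htstar, Set.mem_iUnion] at hx
        obtain ⟨a, hxa⟩ := hx
        exact lt_of_lt_of_le ((hfa a).1 hxa) (htopsτ a)
      have hstarUnb : ∀ g < τ, ∃ d ∈ tstar, g ≤ d := by
        intro g hg
        obtain ⟨a, hga⟩ := hlt_iff g hg
        obtain ⟨d, hd, hgd⟩ := (hfa a).2.1 g hga
        exact ⟨d, hsubstar a hd, hgd⟩
      have hcapstar : ∀ a β, β < tops a → tstar ∩ Set.Iio β = (f a).1.2 ∩ Set.Iio β := by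
        intro a β hβ
        refine Set.Subset.antisymm ?_ (Set.inter_subset_inter_left _ (hsubstar a))
        rintro x ⟨hx1, hx2⟩
        exact ⟨hK2 a x hx1 (lt_trans hx2 hβ), hx2⟩
      have hstarCl : ∀ β < τ, (tstar ∩ Set.Iio β).Nonempty →
          sSup (tstar ∩ Set.Iio β) = β → β ∈ tstar := by
        intro β hβ hne' hsup
        obtain ⟨a, hβa⟩ := hlt_iff β hβ
        rw [hcapstar a β hβa] at hne' hsup
        exact hsubstar a ((hfa a).2.2.1 β hβa hne' hsup)
      have hsmall' : ∀ i ≤ τ, #(cstar i) < Cardinal.lift.{u+1} μ := by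
        intro i hi
        by_cases h : i = τ
        · subst h; rw [hcτ, Cardinal.mk_singleton]; exact one_lt_aleph0.trans_le hLμ
        · obtain ⟨a, hia⟩ := hlt_iff i (hi.lt_of_ne h)
          rw [hK1 a i hia.le]
          exact (f a).1.1.small i hia.le
      have hnonemp' : ∀ i ≤ τ, κ ≤ i.cof → (cstar i).Nonempty := by
        intro i hi hk
        by_cases h : i = τ
        · subst h; rw [hcτ]; exact ⟨tstar, rfl⟩
        · obtain ⟨a, hia⟩ := hlt_iff i (hi.lt_of_ne h)
          rw [hK1 a i hia.le]
          exact (f a).1.1.nonemp i hia.le hk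
      have hclub' : ∀ i ≤ τ, ∀ D ∈ cstar i, D ⊆ Set.Iio i ∧ (∀ g < i, ∃ d ∈ D, g ≤ d) ∧
          (∀ β < i, (D ∩ Set.Iio β).Nonempty → sSup (D ∩ Set.Iio β) = β → β ∈ D) ∧
          typ D ≤ Ordinal.lift.{u+1} μ.ord := by
        intro i hi D hD
        by_cases h : i = τ
        · subst h
          rw [hcτ, Set.mem_singleton_iff] at hD; subst hD
          exact ⟨hstarIio, hstarUnb, hstarCl, hstarμ⟩
        · obtain ⟨a, hia⟩ := hlt_iff i (hi.lt_of_ne h)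
          rw [hK1 a i hia.le] at hD
          exact (f a).1.1.club i hia.le D hD
      have hcoh' : ∀ i ≤ τ, ∀ D ∈ cstar i, ∀ β < i, (D ∩ Set.Iio β).Nonempty →
          sSup (D ∩ Set.Iio β) = β → D ∩ Set.Iio β ∈ cstar β := by
        intro i hi D hD β hβ hne' hsup
        by_cases h : i = τ
        · subst h
          rw [hcτ, Set.mem_singleton_iff] at hD; subst hD
          obtain ⟨a, hβa⟩ := hlt_iff β hβ
          rw [hcapstar a β hβa] at hne' hsup ⊢
          rw [hK1 a β hβa.le]
          exact (f a).1.1.coh (tops a) le_rfl _ (hf a) β hβa hne' hsup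
        · obtain ⟨a, hia⟩ := hlt_iff i (hi.lt_of_ne h)
          rw [hK1 a i hia.le] at hD
          rw [hK1 a β (le_of_lt (lt_of_lt_of_le hβ hia.le))]
          exact (f a).1.1.coh i hia.le D hD β hβ hne' hsup
      refine ⟨⟨⟨{ top := τ
                  top_lt := hτlt
                  c := cstar
                  small := hsmall'
                  nonemp := hnonemp'
                  club := hclub'
                  coh := hcoh' }, tstar⟩, τ, le_rfl, ?_, h1star, hstarη⟩, ?_, ?_⟩
      · show tstar ∈ cstar τ
        rw [hcτ]; exact rfl
      · show tstar ∈ cstar τ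
        rw [hcτ]; exact rfl
      · intro a
        refine ⟨⟨htopsτ a, fun i hi => hK1 a i hi⟩, hsubstar a, ?_⟩
        intro x hx hxn y hy
        have hax : tops a ≤ x := not_lt.mp (fun hlt => hxn (hK2 a x hx hlt))
        exact lt_of_lt_of_le ((hfa a).1 hy) hax
end
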